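/- (Corollary 1) Let f : 𝕋 → ℝ be continuous, even, with mean value zero, with Fourier coefficients satisfying f̂(k) > 0 for all k ≠ 0 and ∑_{k∈ℤ} f̂(k) < ∞, and let (x_n)_{n≥1} be a greedy sequence for f with initial points x_1, …, x_M. Then there is a constant C > 0, depending only on f(0) and the initial points, such that for all n ≥ M, sup_{x∈𝕋} |∑_{ℓ=1}^{n} f(x − x_ℓ)| ≤ C·√n. -/

import Mathlib

open MeasureTheory Filter

private lemma fourier_negpt {k : ℤ} {t : AddCircle (1:ℝ)} :
    fourier k (-t) = fourier (-k) t := by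
  rw [fourier_apply, smul_neg, fourier_neg', ← fourier_neg]

private lemma fourier_addpt {k : ℤ} {a b : AddCircle (1:ℝ)} :
    fourier k (a + b) = fourier k a * fourier k b := by
  simp [fourier_apply, smul_add, AddCircle.toCircle_add]

private lemma haar_eq_vol : (AddCircle.haarAddCircle : Measure UnitAddCircle) = volume := by
  rw [AddCircle.volume_eq_smul_haarAddCircle]; norm_num

/-- Fourier coefficients of a real even function are self-conjugate. -/
private lemma coeff_conj (f : UnitAddCircle → ℝ)
    (hf_even : ∀ t : UnitAddCircle, f (-t) = f t) (k : ℤ) :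
    (starRingEnd ℂ) (fourierCoeff (fun t => (f t : ℂ)) k)
      = fourierCoeff (fun t => (f t : ℂ)) k := by
  have h1 : (starRingEnd ℂ) (fourierCoeff (fun t => (f t : ℂ)) k)
      = ∫ t : UnitAddCircle, fourier k t * (f t : ℂ) ∂AddCircle.haarAddCircle := by
    rw [fourierCoeff, ← integral_conj]
    congr 1; ext t
    simp [smul_eq_mul, map_mul, ← fourier_neg, Complex.conj_ofReal]
  rw [h1, fourierCoeff]
  rw [← integral_neg_eq_self (fun t : UnitAddCircle => fourier k t * (f t : ℂ))
    AddCircle.haarAddCircle]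
  congr 1; ext t
  rw [fourier_negpt, hf_even, smul_eq_mul]

/-- A continuous function with zero mean takes a nonpositive value. -/
private lemma exists_nonpos (g : UnitAddCircle → ℝ) (hgc : Continuous g)
    (hint : (∫ y : UnitAddCircle, g y) = 0) : ∃ y : UnitAddCircle, g y ≤ 0 := by
  by_contra hcon
  push_neg at hcon
  have hgi : Integrable g volume :=
    hgc.integrable_of_hasCompactSupport (HasCompactSupport.of_compactSpace g)
  have hpos : 0 < ∫ y : UnitAddCircle, g y := by
    rw [integral_pos_iff_support_of_nonneg (fun y => (hcon y).le) hgi]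
    have : Function.support g = Set.univ := by
      ext y; simp [Function.support, (hcon y).ne']
    rw [this]; simp
  rw [hint] at hpos; exact lt_irrefl 0 hpos

theorem sup_le_sqrt_n
    (f : UnitAddCircle → ℝ) (hf_cont : Continuous f)
    (hf_even : ∀ t : UnitAddCircle, f (-t) = f t)
    (hf_mean : (∫ t : UnitAddCircle, f t) = 0)
    (hf_sum : Summable fun k : ℤ => ‖fourierCoeff (fun t => (f t : ℂ)) k‖)
    (hf_pos : ∀ k : ℤ, k ≠ 0 → 0 < (fourierCoeff (fun t => (f t : ℂ)) k).re)
    (M : ℕ) (hM : 1 ≤ M) (x : ℕ → UnitAddCircle)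
    (hgreedy : ∀ n : ℕ, M < n → ∀ y : UnitAddCircle,
      ∑ k ∈ Finset.Icc 1 (n - 1), f (x n - x k) ≤ ∑ k ∈ Finset.Icc 1 (n - 1), f (y - x k)) :
    ∃ C > 0, ∀ n : ℕ, M ≤ n → ∀ y : UnitAddCircle,
      |∑ l ∈ Finset.Icc 1 n, f (y - x l)| ≤ C * Real.sqrt n := by
  classical
  set c : ℤ → ℂ := fourierCoeff (fun t : UnitAddCircle => (f t : ℂ)) with hc_def
  -- realness of coefficients
  have hconj : ∀ k, (starRingEnd ℂ) (c k) = c k := coeff_conj f hf_even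
  have hreal : ∀ k, c k = ((c k).re : ℂ) := fun k =>
    ((Complex.conj_eq_iff_re).mp (hconj k)).symm
  have hc0 : c 0 = 0 := by
    rw [hc_def, fourierCoeff]
    simp only [neg_zero, fourier_zero, one_smul]
    rw [haar_eq_vol]
    exact (integral_ofReal (𝕜 := ℂ)).trans (by rw [hf_mean]; norm_num)
  have hre_nonneg : ∀ k, 0 ≤ (c k).re := by
    intro k
    rcases eq_or_ne k 0 with rfl | hk
    · simp [hc0]
    · exact (hf_pos k hk).le
  have hnorm : ∀ k, ‖c k‖ = (c k).re := by
    intro k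
    rw [hreal k]
    simp [Real.norm_eq_abs, abs_of_nonneg (hre_nonneg k)]
  -- pointwise Fourier expansion
  have hsum' : Summable c := hf_sum.of_norm
  have hpt : ∀ t : UnitAddCircle, HasSum (fun k : ℤ => c k * fourier k t) ((f t : ℂ)) := by
    intro t
    have h := has_pointwise_sum_fourier_series_of_summable
      (f := ⟨fun t : UnitAddCircle => (f t : ℂ), Complex.continuous_ofReal.comp hf_cont⟩)
      hsum' t
    simpa [smul_eq_mul] using h
  -- Weyl sums
  set u : ℤ → ℕ → ℂ := fun k n => ∑ l ∈ Finset.Icc 1 n, fourier k (-(x l)) with hu_def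
  have key : ∀ (n : ℕ) (y : UnitAddCircle),
      HasSum (fun k : ℤ => c k * fourier k y * u k n)
        (((∑ l ∈ Finset.Icc 1 n, f (y - x l) : ℝ) : ℂ)) := by
    intro n y
    have h1 : ∀ l : ℕ, HasSum (fun k : ℤ => c k * fourier k y * fourier k (-(x l)))
        ((f (y - x l) : ℂ)) := by
      intro l
      have h2 := hpt (y - x l)
      have h3 : (fun k : ℤ => c k * fourier k (y - x l))
          = fun k : ℤ => c k * fourier k y * fourier k (-(x l)) := by
        funext k; rw [sub_eq_add_neg, fourier_addpt, mul_assoc]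
      rwa [h3] at h2
    have h4 : HasSum (fun k : ℤ => ∑ l ∈ Finset.Icc 1 n,
        c k * fourier k y * fourier k (-(x l)))
        (∑ l ∈ Finset.Icc 1 n, ((f (y - x l) : ℂ))) := hasSum_sum fun l _ => h1 l
    have h5 : (fun k : ℤ => ∑ l ∈ Finset.Icc 1 n, c k * fourier k y * fourier k (-(x l)))
        = fun k : ℤ => c k * fourier k y * u k n := by
      funext k; rw [hu_def, Finset.mul_sum]
    rw [h5] at h4
    convert h4 using 1
    push_cast
    rfl
  -- the energy
  set E : ℕ → ℝ := fun n => ∑ m ∈ Finset.Icc 1 n, ∑ l ∈ Finset.Icc 1 n, f (x m - x l)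
    with hE_def
  have hWconj : ∀ (k : ℤ) (n : ℕ),
      (∑ m ∈ Finset.Icc 1 n, (fourier k (x m) : ℂ)) = (starRingEnd ℂ) (u k n) := by
    intro k n
    rw [hu_def, map_sum]
    refine Finset.sum_congr rfl fun m _ => ?_
    rw [← fourier_neg, fourier_negpt, neg_neg]
  have hEsum : ∀ n : ℕ, HasSum (fun k : ℤ => (c k).re * ‖u k n‖ ^ 2) (E n) := by
    intro n
    have h1 : HasSum (fun k : ℤ => ∑ m ∈ Finset.Icc 1 n, c k * fourier k (x m) * u k n)
        (∑ m ∈ Finset.Icc 1 n,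
          ((∑ l ∈ Finset.Icc 1 n, f (x m - x l) : ℝ) : ℂ)) :=
      hasSum_sum fun m _ => key n (x m)
    have h2 : (fun k : ℤ => ∑ m ∈ Finset.Icc 1 n, c k * fourier k (x m) * u k n)
        = fun k : ℤ => (((c k).re * ‖u k n‖ ^ 2 : ℝ) : ℂ) := by
      funext k
      have e : (∑ m ∈ Finset.Icc 1 n, c k * fourier k (x m) * u k n)
          = (∑ m ∈ Finset.Icc 1 n, (fourier k (x m) : ℂ)) * (c k * u k n) := by
        rw [Finset.sum_mul]
        exact Finset.sum_congr rfl fun m _ => by ring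
      rw [e, hWconj, hreal k]
      rw [show (starRingEnd ℂ) (u k n) * (((c k).re : ℂ) * u k n)
          = (((c k).re : ℂ)) * ((starRingEnd ℂ) (u k n) * u k n) by ring]
      rw [Complex.conj_mul']
      push_cast [Complex.ofReal_re]
      ring
    rw [h2] at h1
    have h3 : (∑ m ∈ Finset.Icc 1 n, ((∑ l ∈ Finset.Icc 1 n, f (x m - x l) : ℝ) : ℂ))
        = ((E n : ℝ) : ℂ) := by rw [hE_def]; push_cast; rfl
    rw [h3] at h1
    exact Complex.hasSum_ofReal.mp h1
  have hterm_nonneg : ∀ (k : ℤ) (n : ℕ), 0 ≤ (c k).re * ‖u k n‖ ^ 2 := fun k n =>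
    mul_nonneg (hre_nonneg k) (by positivity)
  have hEnonneg : ∀ n : ℕ, 0 ≤ E n := by
    intro n
    have := (hEsum n).tsum_eq
    calc (0:ℝ) ≤ ∑' k : ℤ, (c k).re * ‖u k n‖ ^ 2 :=
          tsum_nonneg fun k => hterm_nonneg k n
      _ = E n := this
  -- f 0 ≥ 0
  have hf0 : 0 ≤ f 0 := by
    have h := Complex.hasSum_re (hpt 0)
    have h2 : (fun k : ℤ => (c k * fourier k (0 : UnitAddCircle)).re)
        = fun k : ℤ => (c k).re := by
      funext k
      have : fourier k (0 : UnitAddCircle) = 1 := by simp [fourier_apply]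
      rw [this, mul_one]
    rw [h2] at h
    have h3 : ((f 0 : ℂ)).re = f 0 := by simp
    rw [h3] at h
    calc (0:ℝ) ≤ ∑' k : ℤ, (c k).re := tsum_nonneg hre_nonneg
      _ = f 0 := h.tsum_eq
  -- greedy gives nonpositive increments
  have hS : ∀ n : ℕ, M ≤ n → ∑ l ∈ Finset.Icc 1 n, f (x (n + 1) - x l) ≤ 0 := by
    intro n hn
    obtain ⟨y, hy⟩ := exists_nonpos (fun y => ∑ l ∈ Finset.Icc 1 n, f (y - x l))
      (continuous_finset_sum _ fun l _ =>
        hf_cont.comp (continuous_id.sub continuous_const))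
      (by
        have hintg : ∀ l ∈ Finset.Icc 1 n,
            Integrable (fun y : UnitAddCircle => f (y - x l)) volume := fun l _ =>
          ((hf_cont.comp (continuous_id.sub continuous_const)).integrable_of_hasCompactSupport
            (HasCompactSupport.of_compactSpace _))
        rw [show (fun y : UnitAddCircle => ∑ l ∈ Finset.Icc 1 n, f (y - x l)) = fun y =>
            ∑ l ∈ Finset.Icc 1 n, (fun l (y : UnitAddCircle) => f (y - x l)) l y from rfl]
        simp only
        rw [integral_finset_sum (Finset.Icc 1 n) hintg]
        have h : ∀ l : ℕ, (∫ y : UnitAddCircle, f (y - x l)) = ∫ y : UnitAddCircle, f y :=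
          fun l => integral_sub_right_eq_self f (x l)
        simp [h, hf_mean])
    have h := hgreedy (n + 1) (by omega) y
    simpa using h.trans hy
  -- energy recursion
  have hErec : ∀ n : ℕ, M ≤ n → E (n + 1) ≤ E n + f 0 := by
    intro n hn
    have hins : Finset.Icc 1 (n + 1) = insert (n + 1) (Finset.Icc 1 n) := by
      ext m; simp only [Finset.mem_Icc, Finset.mem_insert]; omega
    have hnotmem : (n + 1) ∉ Finset.Icc 1 n := by simp
    have e1 : ∑ l ∈ Finset.Icc 1 (n + 1), f (x (n + 1) - x l)
        = f 0 + ∑ l ∈ Finset.Icc 1 n, f (x (n + 1) - x l) := by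
      rw [hins, Finset.sum_insert hnotmem, sub_self]
    have e3 : ∀ m : ℕ, f (x m - x (n + 1)) = f (x (n + 1) - x m) := by
      intro m; rw [← hf_even, neg_sub]
    have e4 : E (n + 1) = E n + 2 * (∑ l ∈ Finset.Icc 1 n, f (x (n + 1) - x l)) + f 0 := by
      have estart : E (n + 1) = ∑ m ∈ Finset.Icc 1 (n+1), ∑ l ∈ Finset.Icc 1 (n+1), f (x m - x l) := by
        simp only [hE_def]
      rw [estart, hins, Finset.sum_insert hnotmem, ← hins, e1]
      have e5 : ∑ m ∈ Finset.Icc 1 n, ∑ l ∈ Finset.Icc 1 (n + 1), f (x m - x l)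
          = (∑ l ∈ Finset.Icc 1 n, f (x (n + 1) - x l))
            + ∑ m ∈ Finset.Icc 1 n, ∑ l ∈ Finset.Icc 1 n, f (x m - x l) := by
        have : ∀ m ∈ Finset.Icc 1 n, ∑ l ∈ Finset.Icc 1 (n + 1), f (x m - x l)
            = f (x (n + 1) - x m) + ∑ l ∈ Finset.Icc 1 n, f (x m - x l) := by
          intro m _; rw [hins, Finset.sum_insert hnotmem, e3]
        rw [Finset.sum_congr rfl this, Finset.sum_add_distrib]
      rw [e5]; ring
    have := hS n hn
    rw [e4]; linarith
  -- linear energy bound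
  have hElin : ∀ n : ℕ, M ≤ n → E n ≤ E M + (n : ℝ) * f 0 := by
    have h1 : ∀ n : ℕ, M ≤ n → E n ≤ E M + ((n - M : ℕ) : ℝ) * f 0 := by
      intro n hn
      induction n, hn using Nat.le_induction with
      | base => simp
      | succ m hm ih =>
        have h2 := hErec m hm
        have h3 : ((m + 1 - M : ℕ) : ℝ) = ((m - M : ℕ) : ℝ) + 1 := by
          have : m + 1 - M = (m - M) + 1 := by omega
          rw [this]; push_cast; ring
        rw [h3]; linarith
    intro n hn
    refine (h1 n hn).trans ?_
    have : ((n - M : ℕ) : ℝ) ≤ (n : ℝ) := by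
      have : (n - M : ℕ) ≤ n := by omega
      exact_mod_cast this
    nlinarith
  -- constants
  set A : ℝ := ∑' k : ℤ, ‖c k‖ with hA_def
  have hA_nonneg : 0 ≤ A := tsum_nonneg fun k => norm_nonneg _
  set B : ℝ := E M + f 0 with hB_def
  have hB_nonneg : 0 ≤ B := by have := hEnonneg M; rw [hB_def]; linarith
  refine ⟨Real.sqrt A * Real.sqrt B + 1, by positivity, ?_⟩
  intro n hn y
  -- summability facts
  have hucard : ∀ k : ℤ, ‖u k n‖ ≤ (n : ℝ) := by
    intro k
    rw [hu_def]
    calc ‖∑ l ∈ Finset.Icc 1 n, (fourier k (-(x l)) : ℂ)‖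
        ≤ ∑ l ∈ Finset.Icc 1 n, ‖(fourier k (-(x l)) : ℂ)‖ := norm_sum_le _ _
      _ = ∑ l ∈ Finset.Icc 1 n, 1 := by
          refine Finset.sum_congr rfl fun l _ => ?_; simp [fourier_apply, Circle.norm_coe]
      _ ≤ (n : ℝ) := by simp [Nat.card_Icc]
  have hsum1 : Summable fun k : ℤ => ‖c k‖ * ‖u k n‖ := by
    refine Summable.of_nonneg_of_le (fun k => by positivity)
      (fun k => mul_le_mul_of_nonneg_left (hucard k) (norm_nonneg _)) ?_
    exact hf_sum.mul_right _
  -- main estimate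
  have hmain : |∑ l ∈ Finset.Icc 1 n, f (y - x l)| ≤ Real.sqrt A * Real.sqrt (E n) := by
    have h1 := key n y
    have h2 : |∑ l ∈ Finset.Icc 1 n, f (y - x l)|
        ≤ ∑' k : ℤ, ‖c k * fourier k y * u k n‖ := by
      have h3 := h1.tsum_eq
      calc |∑ l ∈ Finset.Icc 1 n, f (y - x l)|
          = ‖((∑ l ∈ Finset.Icc 1 n, f (y - x l) : ℝ) : ℂ)‖ := by
            rw [Complex.norm_real, Real.norm_eq_abs]
        _ = ‖∑' k : ℤ, c k * fourier k y * u k n‖ := by rw [h3]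
        _ ≤ ∑' k : ℤ, ‖c k * fourier k y * u k n‖ :=
            norm_tsum_le_tsum_norm (by
              refine Summable.of_nonneg_of_le (fun k => norm_nonneg _)
                (fun k => ?_) hsum1
              rw [norm_mul, norm_mul]
              have : ‖(fourier k y : ℂ)‖ = 1 := by simp [fourier_apply, Circle.norm_coe]
              rw [this, mul_one])
    have h4 : (∑' k : ℤ, ‖c k * fourier k y * u k n‖)
        ≤ ∑' k : ℤ, ‖c k‖ * ‖u k n‖ := by
      refine Summable.tsum_le_tsum (fun k => ?_) (by
        refine Summable.of_nonneg_of_le (fun k => norm_nonneg _) (fun k => ?_) hsum1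
        rw [norm_mul, norm_mul]
        have : ‖(fourier k y : ℂ)‖ = 1 := by simp [fourier_apply, Circle.norm_coe]
        rw [this, mul_one]) hsum1
      rw [norm_mul, norm_mul]
      have : ‖(fourier k y : ℂ)‖ = 1 := by simp [fourier_apply, Circle.norm_coe]
      rw [this, mul_one]
    have h5 : (∑' k : ℤ, ‖c k‖ * ‖u k n‖) ≤ Real.sqrt A * Real.sqrt (E n) := by
      refine Summable.tsum_le_of_sum_le hsum1 fun s => ?_
      have h6 : ∀ k ∈ s, ‖c k‖ * ‖u k n‖
          = Real.sqrt ‖c k‖ * Real.sqrt ((c k).re * ‖u k n‖ ^ 2) := by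
        intro k _
        rw [← hnorm k, ← Real.sqrt_mul (norm_nonneg _),
          show ‖c k‖ * (‖c k‖ * ‖u k n‖ ^ 2) = (‖c k‖ * ‖u k n‖) ^ 2 by ring,
          Real.sqrt_sq (by positivity)]
      rw [Finset.sum_congr rfl h6]
      have h7 : ∀ k : ℤ, Real.sqrt ‖c k‖ * Real.sqrt ((c k).re * ‖u k n‖ ^ 2)
          = Real.sqrt ‖c k‖ * Real.sqrt ((fun k => (c k).re * ‖u k n‖ ^ 2) k) := fun _ => rfl
      calc ∑ k ∈ s, Real.sqrt ‖c k‖ * Real.sqrt ((c k).re * ‖u k n‖ ^ 2)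
          ≤ Real.sqrt (∑ k ∈ s, ‖c k‖)
            * Real.sqrt (∑ k ∈ s, (c k).re * ‖u k n‖ ^ 2) :=
            Real.sum_sqrt_mul_sqrt_le s (fun k => norm_nonneg _)
              (fun k => hterm_nonneg k n)
        _ ≤ Real.sqrt A * Real.sqrt (E n) := by
            have hs1 : (∑ k ∈ s, ‖c k‖) ≤ A :=
              Summable.sum_le_tsum s (fun k _ => norm_nonneg _) hf_sum
            have hs2 : (∑ k ∈ s, (c k).re * ‖u k n‖ ^ 2) ≤ E n := by
              have := (hEsum n).tsum_eq
              calc (∑ k ∈ s, (c k).re * ‖u k n‖ ^ 2)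
                  ≤ ∑' k : ℤ, (c k).re * ‖u k n‖ ^ 2 :=
                    Summable.sum_le_tsum s (fun k _ => hterm_nonneg k n) (hEsum n).summable
                _ = E n := this
            exact mul_le_mul (Real.sqrt_le_sqrt hs1) (Real.sqrt_le_sqrt hs2)
              (Real.sqrt_nonneg _) (Real.sqrt_nonneg _)
    linarith
  -- conclude
  have hEn : E n ≤ B * (n : ℝ) := by
    have h1 := hElin n hn
    have hn1 : (1 : ℝ) ≤ (n : ℝ) := by exact_mod_cast le_trans hM hn
    have hEM := hEnonneg M
    rw [hB_def]; nlinarith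
  calc |∑ l ∈ Finset.Icc 1 n, f (y - x l)|
      ≤ Real.sqrt A * Real.sqrt (E n) := hmain
    _ ≤ Real.sqrt A * Real.sqrt (B * (n : ℝ)) := by
        exact mul_le_mul_of_nonneg_left (Real.sqrt_le_sqrt hEn) (Real.sqrt_nonneg _)
    _ = Real.sqrt A * Real.sqrt B * Real.sqrt (n : ℝ) := by
        rw [Real.sqrt_mul hB_nonneg]; ring
    _ ≤ (Real.sqrt A * Real.sqrt B + 1) * Real.sqrt (n : ℝ) := by
        have := Real.sqrt_nonneg (n : ℝ)
        nlinarith
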